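/- For the polynomial p_3(z) = z + (2/√5) z^2 + (1/2)(1 - 1/√5) z^3, the minimum of |p_3(z)| over the unit circle equals |p_3(-1)| = (3 - √5)/2. -/

import Mathlib

set_option maxHeartbeats 1000000

theorem stmt_14 (p₃ : ℂ → ℂ)
    (hp₃ : ∀ z, p₃ z = z + (2 / Real.sqrt 5 : ℝ) * z ^ 2 +
      ((1 / 2 * (1 - 1 / Real.sqrt 5) : ℝ)) * z ^ 3) :
    IsLeast {r : ℝ | ∃ z : ℂ, ‖z‖ = 1 ∧ r = ‖p₃ z‖} ‖p₃ (-1)‖ ∧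
      ‖p₃ (-1)‖ = (3 - Real.sqrt 5) / 2 := by
  set s := Real.sqrt 5 with hs_def
  have hs0 : (0:ℝ) < s := Real.sqrt_pos.mpr (by norm_num)
  have hs2 : s ^ 2 = 5 := Real.sq_sqrt (by norm_num)
  have hsgt : 2 < s := by nlinarith
  have hslt : s < 3 := by nlinarith
  have ha : (2 / s : ℝ) = 2 * s / 5 := by
    field_simp; nlinarith
  have hb : (1 / 2 * (1 - 1 / s) : ℝ) = 1 / 2 - s / 10 := by
    field_simp; nlinarith
  have hp' : ∀ w : ℂ, p₃ w = ((2 * s / 5 : ℝ) : ℂ) * w ^ 2 +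
      ((1 / 2 - s / 10 : ℝ) : ℂ) * w ^ 3 + w := by
    intro w
    rw [hp₃ w, ← ha, ← hb]; ring
  have hval : p₃ (-1) = (((s - 3) / 2 : ℝ) : ℂ) := by
    rw [hp']; push_cast; ring
  have hnorm : ‖p₃ (-1)‖ = (3 - s) / 2 := by
    rw [hval, Complex.norm_real, Real.norm_eq_abs, abs_of_nonpos (by linarith)]; ring
  refine ⟨⟨⟨-1, by simp, rfl⟩, ?_⟩, hnorm⟩
  rintro r ⟨z, hz, rfl⟩
  rw [hnorm]
  set x := z.re with hx
  set y := z.im with hy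
  have h1 : x ^ 2 + y ^ 2 = 1 := by
    have h : Complex.normSq z = 1 := by
      rw [Complex.normSq_eq_norm_sq, hz]; norm_num
    rw [Complex.normSq_apply] at h
    rw [sq, sq]; exact h
  have hre : (p₃ z).re = (2 * s / 5) * (x ^ 2 - y ^ 2) +
      (1 / 2 - s / 10) * (x ^ 3 - 3 * x * y ^ 2) + x := by
    rw [hp']
    simp only [Complex.add_re, Complex.add_im, Complex.mul_re, Complex.mul_im,
      Complex.ofReal_re, Complex.ofReal_im, pow_succ, pow_zero, Complex.one_re,
      Complex.one_im]
    ring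
  have him : (p₃ z).im = (2 * s / 5) * (2 * x * y) +
      (1 / 2 - s / 10) * (3 * x ^ 2 * y - y ^ 3) + y := by
    rw [hp']
    simp only [Complex.add_re, Complex.add_im, Complex.mul_re, Complex.mul_im,
      Complex.ofReal_re, Complex.ofReal_im, pow_succ, pow_zero, Complex.one_re,
      Complex.one_im]
    ring
  have key : (p₃ z).re ^ 2 + (p₃ z).im ^ 2 = ((3 - s) / 2) ^ 2 +
      (10 - 2 * s) * (x + 1) * (10 * x - 5 + 7 * s) / 50 := by
    rw [hre, him]
    linear_combination
      ((11/10 : ℝ) + (1/10)*s + (1/10)*y^2 + (1/10)*y^2*s + (3/10)*y^4 - (1/10)*y^4*s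
        - (2/5)*x + (6/5)*x*s - (2/5)*x*y^2 + (2/5)*x*y^2*s + (21/10)*x^2 - (3/10)*x^2*s
        + (3/5)*x^2*y^2 - (1/5)*x^2*y^2*s - (2/5)*x^3 + (2/5)*x^3*s + (3/10)*x^4
        - (1/10)*x^4*s) * h1 +
      ((3/100 : ℝ) + (4/25)*y^4 + (1/100)*y^6 + (7/25)*x - (2/25)*x*y^4 + (8/25)*x^2*y^2
        + (3/100)*x^2*y^4 - (4/25)*x^3*y^2 + (4/25)*x^4 + (3/100)*x^4*y^2 - (2/25)*x^5
        + (1/100)*x^6) * hs2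
  have hx1 : -1 ≤ x := by nlinarith [sq_nonneg y]
  have hterm : 0 ≤ (10 - 2 * s) * (x + 1) * (10 * x - 5 + 7 * s) / 50 := by
    have h7 : 15 ≤ 7 * s := by nlinarith
    have : 0 ≤ 10 * x - 5 + 7 * s := by linarith
    have h2 : 0 ≤ (10 - 2 * s) * (x + 1) := by
      apply mul_nonneg <;> linarith
    positivity
  have hsq : ((3 - s) / 2) ^ 2 ≤ ‖p₃ z‖ ^ 2 := by
    have : ‖p₃ z‖ ^ 2 = (p₃ z).re ^ 2 + (p₃ z).im ^ 2 := by
      rw [Complex.sq_norm, Complex.normSq_apply]; ring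
    rw [this, key]; linarith
  nlinarith [norm_nonneg (p₃ z), hsq]
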